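/- Consider the scalar iteration α_{n+1} = α_n - (1/λ)(T³ α_n³ + τ α_n) with λ > 0, T > 0, τ ≥ 0. If τ > 0, λ ≥ τ + T³ α_0², and α_0 > 0, then 0 ≤ α_{n+1} ≤ (1 - τ/λ) α_n for all n, hence α_n ≤ (1 - τ/λ)^n α_0, i.e., α_n converges to 0 geometrically. -/

import Mathlib

/-- Geometric convergence of the regularized scalar iteration. -/
theorem stmt_9 (lam T τ α0 : ℝ) (hlam : 0 < lam) (hT : 0 < T) (hτ : 0 < τ)
    (hα0 : 0 < α0) (hstep : τ + T ^ 3 * α0 ^ 2 ≤ lam)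
    (α : ℕ → ℝ) (hinit : α 0 = α0)
    (hrec : ∀ n, α (n + 1) = α n - (1 / lam) * (T ^ 3 * (α n) ^ 3 + τ * α n)) :
    (∀ n, 0 ≤ α (n + 1) ∧ α (n + 1) ≤ (1 - τ / lam) * α n) ∧
    (∀ n, α n ≤ (1 - τ / lam) ^ n * α0) := by
  have hT3 : 0 < T ^ 3 := by positivity
  have hinv : ∀ n, 0 ≤ α n ∧ α n ≤ α0 := by
    intro n
    induction n with
    | zero => exact ⟨by linarith [hinit ▸ hα0.le], hinit.le⟩
    | succ n ih =>
      obtain ⟨h0, h1⟩ := ih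
      have hc : T ^ 3 * (α n) ^ 2 + τ ≤ lam := by
        nlinarith [mul_self_le_mul_self h0 h1]
      have key : α (n + 1) = α n * (1 - (T ^ 3 * (α n) ^ 2 + τ) / lam) := by
        rw [hrec n]; field_simp
      constructor
      · rw [key]
        apply mul_nonneg h0
        rw [sub_nonneg]
        exact div_le_one_of_le₀ hc hlam.le
      · rw [key]
        have : 1 - (T ^ 3 * (α n) ^ 2 + τ) / lam ≤ 1 := by
          have : 0 ≤ (T ^ 3 * (α n) ^ 2 + τ) / lam := by positivity
          linarith
        nlinarith
  have hmain : ∀ n, 0 ≤ α (n + 1) ∧ α (n + 1) ≤ (1 - τ / lam) * α n := by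
    intro n
    obtain ⟨h0, h1⟩ := hinv n
    obtain ⟨h0', _⟩ := hinv (n + 1)
    refine ⟨h0', ?_⟩
    have hτα : 0 ≤ T ^ 3 * (α n) ^ 3 := by positivity
    have h2 : lam * α (n + 1) = lam * α n - (T ^ 3 * (α n) ^ 3 + τ * α n) := by
      rw [hrec n]; field_simp
    rw [← mul_le_mul_iff_right₀ hlam, h2]
    have h3 : lam * ((1 - τ / lam) * α n) = lam * α n - τ * α n := by
      field_simp
    rw [h3]; linarith
  refine ⟨hmain, ?_⟩
  intro n
  induction n with
  | zero => simp [hinit]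
  | succ n ih =>
    have h := (hmain n).2
    have hr : 0 ≤ 1 - τ / lam := by
      rw [sub_nonneg]; apply div_le_one_of_le₀ (by nlinarith) hlam.le
    calc α (n + 1) ≤ (1 - τ / lam) * α n := h
      _ ≤ (1 - τ / lam) * ((1 - τ / lam) ^ n * α0) := by
          exact mul_le_mul_of_nonneg_left ih hr
      _ = (1 - τ / lam) ^ (n + 1) * α0 := by ring
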